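/- Let q be a prime power and let X be the set of closed points of the projective line over F_q, where each closed point x has a degree d_x ≥ 1, and the number of closed points of degree d is Ψ(d) with Σ_{d|n} d·Ψ(d) = q^n + 1 for all n ≥ 1 (here the point at infinity contributes one point of degree 1 beyond the affine irreducible polynomials). Then for every a ≥ 1, the sum over all finitely supported functions n: X → ℕ with Σ_x d_x·n_x = a of the product over x with n_x ≥ 1 of (q^{d_x·n_x} - q^{d_x·n_x - d_x}) equals q^{2a} - q^{2a-2}. -/

import Mathlib

open PowerSeries Finset

noncomputable section SumTorsionAux

namespace SumTorsionAux

/-- The local factor `(1 - t^e)/(1 - u^e t^e)` expanded as a power series. -/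
def Lser (u : ℚ) (e : ℕ) : ℚ⟦X⟧ :=
  PowerSeries.mk fun m => if e ∣ m then (if m = 0 then 1 else u ^ m - u ^ (m - e)) else 0

/-- `1 - r^e t^e`. -/
def Mser (r : ℚ) (e : ℕ) : ℚ⟦X⟧ :=
  1 - PowerSeries.C (r ^ e) * (PowerSeries.X : ℚ⟦X⟧) ^ e

lemma coeff_Mser (r : ℚ) (e n : ℕ) :
    (coeff n) (Mser r e) = (if n = 0 then 1 else 0) - (if n = e then r ^ e else 0) := by
  rw [Mser, map_sub, coeff_one, coeff_C_mul, coeff_X_pow]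
  split_ifs <;> ring

lemma constantCoeff_Mser (r : ℚ) {e : ℕ} (he : 1 ≤ e) :
    constantCoeff (Mser r e) = 1 := by
  rw [← coeff_zero_eq_constantCoeff, coeff_Mser]
  have : ¬ (0 = e) := by omega
  simp [this]

lemma coeff_Lser (u : ℚ) (e m : ℕ) :
    (coeff m) (Lser u e) =
      if e ∣ m then (if m = 0 then 1 else u ^ m - u ^ (m - e)) else 0 := by
  simp [Lser]

lemma Lser_mul_Mser (u : ℚ) {e : ℕ} (he : 1 ≤ e) :
    Lser u e * Mser u e = Mser 1 e := by
  have hrw : Lser u e * Mser u e = Lser u e - (Lser u e * X ^ e) * C (u ^ e) := by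
    rw [Mser]; ring
  ext n
  rw [hrw, map_sub, coeff_mul_C, coeff_mul_X_pow', coeff_Mser, coeff_Lser, one_pow]
  by_cases hen : e ≤ n
  · have hn0 : n ≠ 0 := by omega
    by_cases hdvd : e ∣ n
    · rw [coeff_Lser, if_pos ((Nat.dvd_sub hdvd dvd_rfl))]
      by_cases hne : n = e
      · have h0 : n - e = 0 := by omega
        have he0 : e ≠ 0 := by omega
        simp [hn0, hne, h0, he0]
      · have h2e : 2 * e ≤ n := by
          rcases hdvd with ⟨k, rfl⟩
          rcases k with _ | _ | k <;> simp_all <;> nlinarith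
        have hne0 : n - e ≠ 0 := by omega
        have h1 : u ^ (n - e) * u ^ e = u ^ n := by
          rw [← pow_add]; congr 1; omega
        have h2 : u ^ (n - e - e) * u ^ e = u ^ (n - e) := by
          rw [← pow_add]; congr 1; omega
        simp only [if_neg hn0, if_neg hne0, if_pos hdvd, if_neg hne, if_pos hen]
        ring_nf
        nlinarith [h1, h2]
    · have hdvd' : ¬ e ∣ n - e := by
        intro h
        apply hdvd
        have h2 : e ∣ (n - e) + e := Nat.dvd_add h dvd_rfl
        rwa [Nat.sub_add_cancel hen] at h2
      have hne : n ≠ e := fun h => hdvd (h ▸ dvd_rfl)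
      rw [coeff_Lser, if_neg hdvd']
      simp [hdvd, hn0, hne]
  · rw [if_neg hen]
    by_cases hn0 : n = 0
    · subst hn0
      have : ¬ (0 = e) := by omega
      simp [this]
    · have hdvd : ¬ e ∣ n := fun h => by
        have := Nat.le_of_dvd (by omega) h; omega
      have hne : n ≠ e := by omega
      simp [hdvd, hn0, hne]

/-- Logarithmic derivative. -/
def logd (f : ℚ⟦X⟧) : ℚ⟦X⟧ := d⁄dX ℚ f * f⁻¹

lemma derivative_eq_logd_mul {f : ℚ⟦X⟧} (hf : constantCoeff f ≠ 0) :
    d⁄dX ℚ f = logd f * f := by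
  rw [logd, mul_assoc, PowerSeries.inv_mul_cancel _ hf, mul_one]

lemma logd_mul {f g : ℚ⟦X⟧} (hf : constantCoeff f ≠ 0) (hg : constantCoeff g ≠ 0) :
    logd (f * g) = logd f + logd g := by
  have hf1 : f * f⁻¹ = 1 := PowerSeries.mul_inv_cancel _ hf
  have hg1 : g * g⁻¹ = 1 := PowerSeries.mul_inv_cancel _ hg
  calc logd (f * g) = (f * d⁄dX ℚ g + g * d⁄dX ℚ f) * (g⁻¹ * f⁻¹) := by
        rw [logd, Derivation.leibniz, smul_eq_mul, smul_eq_mul, PowerSeries.mul_inv_rev]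
    _ = (d⁄dX ℚ f * f⁻¹) * (g * g⁻¹) + (d⁄dX ℚ g * g⁻¹) * (f * f⁻¹) := by ring
    _ = logd f + logd g := by rw [hf1, hg1, mul_one, mul_one]; rfl

lemma logd_one : logd 1 = 0 := by
  rw [logd]
  simp

lemma logd_prod {ι : Type*} (s : Finset ι) (f : ι → ℚ⟦X⟧)
    (h : ∀ i ∈ s, constantCoeff (f i) ≠ 0) :
    logd (∏ i ∈ s, f i) = ∑ i ∈ s, logd (f i) := by
  classical
  induction s using Finset.cons_induction with
  | empty => simpa using logd_one
  | cons a s ha ih =>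
    rw [Finset.prod_cons, Finset.sum_cons,
      logd_mul (h a (Finset.mem_cons_self a s)) ?_, ih (fun i hi => h i (Finset.mem_cons_of_mem hi))]
    rw [map_prod]
    exact Finset.prod_ne_zero_iff.2 fun i hi => h i (Finset.mem_cons_of_mem hi)

lemma derivative_Mser (r : ℚ) {e : ℕ} (he : 1 ≤ e) :
    d⁄dX ℚ (Mser r e) =
      (PowerSeries.mk fun m => if e ∣ (m + 1) then -(e : ℚ) * r ^ (m + 1) else 0) * Mser r e := by
  set g : ℚ⟦X⟧ := PowerSeries.mk fun m => if e ∣ (m + 1) then -(e : ℚ) * r ^ (m + 1) else 0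
    with hg
  have hrw : g * Mser r e = g - (g * X ^ e) * C (r ^ e) := by rw [Mser]; ring
  ext n
  rw [hrw, map_sub, coeff_mul_C, coeff_mul_X_pow', coeff_derivative, coeff_Mser, hg, coeff_mk]
  have hn1 : ¬ (n + 1 = 0) := by omega
  by_cases hdvd : e ∣ n + 1
  · by_cases hne : n + 1 = e
    · have hen : ¬ e ≤ n := by omega
      rw [if_neg hn1, if_pos hdvd, if_pos hne, if_neg hen, ← hne]
      push_cast
      ring
    · have h2e : 2 * e ≤ n + 1 := by
        rcases hdvd with ⟨k, hk⟩
        rcases k with _ | _ | k <;> simp_all <;> nlinarith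
      have hen : e ≤ n := by omega
      have hdvd' : e ∣ n - e + 1 := by
        have : n - e + 1 = (n + 1) - e := by omega
        rw [this]
        exact Nat.dvd_sub hdvd dvd_rfl
      have hexp : r ^ (n - e + 1) * r ^ e = r ^ (n + 1) := by
        rw [← pow_add]; congr 1; omega
      rw [if_neg hn1, if_neg hne, if_pos hdvd, if_pos hen, coeff_mk, if_pos hdvd']
      linear_combination (-(e : ℚ)) * hexp
  · have hne : n + 1 ≠ e := fun h => hdvd (h ▸ dvd_rfl)
    rw [if_neg hn1, if_neg hne, if_neg hdvd]
    by_cases hen : e ≤ n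
    · have hdvd' : ¬ e ∣ n - e + 1 := by
        intro h
        apply hdvd
        have h1 : n + 1 = (n - e + 1) + e := by omega
        rw [h1]
        exact Nat.dvd_add h dvd_rfl
      rw [if_pos hen, coeff_mk, if_neg hdvd']
      ring
    · rw [if_neg hen]
      ring

lemma logd_Mser (r : ℚ) {e : ℕ} (he : 1 ≤ e) :
    logd (Mser r e) =
      PowerSeries.mk fun m => if e ∣ (m + 1) then -(e : ℚ) * r ^ (m + 1) else 0 := by
  have hc : constantCoeff (Mser r e) ≠ 0 := by rw [constantCoeff_Mser r he]; norm_num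
  rw [logd, derivative_Mser r he, mul_assoc, PowerSeries.mul_inv_cancel _ hc, mul_one]

lemma coeff_logd_Mser (r : ℚ) {e : ℕ} (he : 1 ≤ e) (m : ℕ) :
    coeff m (logd (Mser r e)) = if e ∣ (m + 1) then -(e : ℚ) * r ^ (m + 1) else 0 := by
  rw [logd_Mser r he, coeff_mk]

/-- The main power series computation. -/
lemma coeff_prod_Lser {Y : Type*} [DecidableEq Y] (q : ℕ) (T : Finset Y) (d : Y → ℕ)
    (hd1 : ∀ x ∈ T, 1 ≤ d x) (a : ℕ) (ha : 1 ≤ a)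
    (hsum : ∀ n : ℕ, 1 ≤ n → n ≤ a →
      ∑ x ∈ T.filter (fun x => d x ∣ n), (d x : ℚ) = (q : ℚ) ^ n + 1) :
    coeff a (∏ x ∈ T, Lser (q : ℚ) (d x)) = (q : ℚ) ^ (2 * a) - (q : ℚ) ^ (2 * a - 2) := by
  set G : ℚ⟦X⟧ := ∏ x ∈ T, Lser (q : ℚ) (d x) with hG
  set H : ℚ⟦X⟧ := Lser ((q : ℚ) ^ 2) 1 with hH
  set A : ℚ⟦X⟧ := ∏ x ∈ T, Mser 1 (d x) with hA
  set B : ℚ⟦X⟧ := ∏ x ∈ T, Mser (q : ℚ) (d x) with hB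
  set P : ℚ⟦X⟧ := Mser ((q : ℚ) ^ 2) 1 with hP
  set Qs : ℚ⟦X⟧ := Mser (1 : ℚ) 1 with hQs
  have hGB : G * B = A := by
    rw [hG, hB, hA, ← Finset.prod_mul_distrib]
    exact Finset.prod_congr rfl fun x hx => Lser_mul_Mser _ (hd1 x hx)
  have hHP : H * P = Qs := Lser_mul_Mser _ le_rfl
  set U : ℚ⟦X⟧ := A * P with hU
  set V : ℚ⟦X⟧ := Qs * B with hV
  have hccB : constantCoeff B = 1 := by
    rw [hB, map_prod]
    exact Finset.prod_eq_one fun x hx => constantCoeff_Mser _ (hd1 x hx)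
  have hccA : constantCoeff A = 1 := by
    rw [hA, map_prod]
    exact Finset.prod_eq_one fun x hx => constantCoeff_Mser _ (hd1 x hx)
  have hccP : constantCoeff P = 1 := constantCoeff_Mser _ le_rfl
  have hccQ : constantCoeff Qs = 1 := constantCoeff_Mser _ le_rfl
  have hccU : constantCoeff U = 1 := by rw [hU, map_mul, hccA, hccP, mul_one]
  have hccV : constantCoeff V = 1 := by rw [hV, map_mul, hccQ, hccB, mul_one]
  have hccU' : constantCoeff U ≠ 0 := by rw [hccU]; norm_num
  have hccV' : constantCoeff V ≠ 0 := by rw [hccV]; norm_num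
  -- logarithmic derivatives agree in low degrees
  have hlog : ∀ n : ℕ, n + 1 ≤ a → coeff n (logd U) = coeff n (logd V) := by
    intro n hn
    have h1n : 1 ≤ n + 1 := by omega
    have key := hsum (n + 1) h1n hn
    have hlogU : logd U = (∑ x ∈ T, logd (Mser 1 (d x))) + logd P := by
      rw [hU, logd_mul (by rw [hccA]; norm_num) (by rw [hccP]; norm_num), hA,
        logd_prod T _ (fun x hx => by rw [constantCoeff_Mser _ (hd1 x hx)]; norm_num)]
    have hlogV : logd V = logd Qs + ∑ x ∈ T, logd (Mser (q : ℚ) (d x)) := by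
      rw [hV, logd_mul (by rw [hccQ]; norm_num) (by rw [hccB]; norm_num), hB,
        logd_prod T _ (fun x hx => by rw [constantCoeff_Mser _ (hd1 x hx)]; norm_num)]
    rw [hlogU, hlogV, map_add, map_add, map_sum, map_sum]
    have hTsum1 : ∑ x ∈ T, coeff n (logd (Mser 1 (d x))) =
        -((q : ℚ) ^ (n + 1) + 1) := by
      rw [← key, Finset.sum_congr rfl fun x hx => coeff_logd_Mser 1 (hd1 x hx) n,
        ← Finset.sum_filter, ← Finset.sum_neg_distrib]
      exact Finset.sum_congr rfl fun x hx => by rw [one_pow, mul_one]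
    have hTsum2 : ∑ x ∈ T, coeff n (logd (Mser (q : ℚ) (d x))) =
        -(((q : ℚ) ^ (n + 1) + 1) * (q : ℚ) ^ (n + 1)) := by
      rw [← key, Finset.sum_congr rfl fun x hx => coeff_logd_Mser (q : ℚ) (hd1 x hx) n,
        ← Finset.sum_filter, Finset.sum_mul, ← Finset.sum_neg_distrib]
      exact Finset.sum_congr rfl fun x hx => by ring
    rw [hTsum1, hTsum2, coeff_logd_Mser _ le_rfl, coeff_logd_Mser _ le_rfl,
      if_pos (one_dvd _), if_pos (one_dvd _)]
    ring
  -- conclude coefficients of U and V agree in degrees ≤ a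
  have hUV : ∀ n : ℕ, n ≤ a → coeff n U = coeff n V := by
    set W : ℚ⟦X⟧ := U * V⁻¹ with hW
    have hVV : V * V⁻¹ = 1 := PowerSeries.mul_inv_cancel _ hccV'
    have hccVinv : constantCoeff V⁻¹ ≠ 0 := by
      rw [PowerSeries.constantCoeff_inv, hccV]; norm_num
    have hlogW : logd W = logd U - logd V := by
      have h1 : logd (V * V⁻¹) = logd V + logd V⁻¹ := logd_mul hccV' hccVinv
      rw [hVV, logd_one] at h1
      rw [hW, logd_mul hccU' hccVinv]
      linear_combination -h1
    have hccW : constantCoeff W ≠ 0 := by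
      rw [hW, map_mul]
      exact mul_ne_zero hccU' hccVinv
    have hWd : d⁄dX ℚ W = (logd U - logd V) * W := by
      rw [← hlogW]; exact derivative_eq_logd_mul hccW
    have hWd0 : ∀ n : ℕ, n + 1 ≤ a → coeff n (d⁄dX ℚ W) = 0 := by
      intro n hn
      rw [hWd, coeff_mul]
      apply Finset.sum_eq_zero
      rintro ⟨i, j⟩ hij
      rw [Finset.HasAntidiagonal.mem_antidiagonal] at hij
      have hi : i + 1 ≤ a := by omega
      rw [map_sub, hlog i hi, sub_self, zero_mul]
    have hWn : ∀ n : ℕ, 1 ≤ n → n ≤ a → coeff n W = 0 := by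
      intro n h1 h2
      have := hWd0 (n - 1) (by omega)
      rw [coeff_derivative] at this
      have hn : n - 1 + 1 = n := by omega
      rw [hn] at this
      have hne : ((n - 1 : ℕ) : ℚ) + 1 ≠ 0 := by
        push_cast; positivity
      exact (mul_eq_zero.mp this).resolve_right hne
    have hW0 : coeff 0 W = 1 := by
      rw [coeff_zero_eq_constantCoeff, hW, map_mul, hccU, PowerSeries.constantCoeff_inv, hccV]
      norm_num
    intro n hn
    have hUWV : U = W * V := by rw [hW, mul_assoc, PowerSeries.inv_mul_cancel _ hccV', mul_one]
    rw [hUWV, coeff_mul]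
    rw [Finset.sum_eq_single (0, n)]
    · rw [hW0, one_mul]
    · rintro ⟨i, j⟩ hij hne
      rw [Finset.HasAntidiagonal.mem_antidiagonal] at hij
      have hi1 : 1 ≤ i := by
        rcases Nat.eq_zero_or_pos i with h | h
        · exfalso; apply hne; simp [h] at hij ⊢; omega
        · exact h
      rw [hWn i hi1 (by omega), zero_mul]
    · intro h
      exfalso
      exact h (by simp)
  -- transfer to G and H
  set E : ℚ⟦X⟧ := B * P with hE
  have hccE : constantCoeff E = 1 := by rw [hE, map_mul, hccB, hccP, mul_one]
  have hccE' : constantCoeff E ≠ 0 := by rw [hccE]; norm_num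
  have hUGE : U = G * E := by rw [hU, ← hGB, hE]; ring
  have hVHE : V = H * E := by rw [hV, ← hHP, hE]; ring
  have hGH : G - H = (U - V) * E⁻¹ := by
    rw [hUGE, hVHE, ← sub_mul, mul_assoc, PowerSeries.mul_inv_cancel _ hccE', mul_one]
  have hcoeff : coeff a (G - H) = 0 := by
    rw [hGH, coeff_mul]
    apply Finset.sum_eq_zero
    rintro ⟨i, j⟩ hij
    rw [Finset.HasAntidiagonal.mem_antidiagonal] at hij
    rw [map_sub, hUV i (by omega), sub_self, zero_mul]
  have hGa : coeff a G = coeff a H := by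
    have := hcoeff
    rw [map_sub, sub_eq_zero] at this
    exact this
  rw [hGa, hH, coeff_Lser, if_pos (one_dvd _), if_neg (by omega : ¬ a = 0)]
  rw [← pow_mul, ← pow_mul]
  congr 2 <;> omega

end SumTorsionAux

end SumTorsionAux

/-- Let `q` be a prime power and `X` an abstract set of "closed points of `ℙ¹` over `𝔽_q`",
each point `x` having a degree `d x ≥ 1`, such that for every `n ≥ 1` the set of points of
degree dividing `n` is finite with weighted count `∑_{d x ∣ n} d x = q^n + 1`.  Then for every
`a ≥ 1`,
`∑_{n : X →₀ ℕ, ∑ d x · n x = a} ∏_{n x ≥ 1} (q^{d x · n x} - q^{d x · n x - d x})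
   = q^{2a} - q^{2a-2}`. -/
theorem sum_torsion_count (q : ℕ) (hq : IsPrimePow q)
    (X : Type*) (d : X → ℕ) (hd : ∀ x, 1 ≤ d x)
    (hcount : ∀ n : ℕ, 1 ≤ n →
      ∃ s : Finset X, (∀ x, x ∈ s ↔ d x ∣ n) ∧ ∑ x ∈ s, d x = q ^ n + 1)
    (a : ℕ) (ha : 1 ≤ a) :
    (∑ᶠ (f : X →₀ ℕ) (_ : ∑ x ∈ f.support, d x * f x = a),
        ∏ x ∈ f.support, ((q : ℚ) ^ (d x * f x) - (q : ℚ) ^ (d x * f x - d x))) =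
      (q : ℚ) ^ (2 * a) - (q : ℚ) ^ (2 * a - 2) := by
  classical
  obtain ⟨T, hTmem, -⟩ := hcount (Nat.factorial a) (Nat.factorial_pos a)
  have hTdeg : ∀ x, d x ≤ a → x ∈ T := fun x hx => (hTmem x).mpr (Nat.dvd_factorial (hd x) hx)
  have hsum : ∀ n : ℕ, 1 ≤ n → n ≤ a →
      ∑ x ∈ T.filter (fun x => d x ∣ n), ((d x : ℚ)) = (q : ℚ) ^ n + 1 := by
    intro n h1 h2
    obtain ⟨s, hs1, hs2⟩ := hcount n h1
    have hfe : T.filter (fun x => d x ∣ n) = s := by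
      ext x
      simp only [Finset.mem_filter, hs1 x]
      constructor
      · rintro ⟨-, h⟩; exact h
      · intro h
        exact ⟨hTdeg x (le_trans (Nat.le_of_dvd (by omega) h) h2), h⟩
    rw [hfe, ← Nat.cast_sum, hs2]
    push_cast
    ring
  -- the two scaling maps
  set scl : (X →₀ ℕ) → (X →₀ ℕ) := fun f =>
    Finsupp.onFinset f.support (fun x => d x * f x)
      (fun x h => Finsupp.mem_support_iff.mpr fun h0 => h (by simp [h0])) with hscl
  set uns : (X →₀ ℕ) → (X →₀ ℕ) := fun l =>
    Finsupp.onFinset l.support (fun x => l x / d x)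
      (fun x h => Finsupp.mem_support_iff.mpr fun h0 => h (by simp [h0])) with huns
  have hscl_apply : ∀ f x, scl f x = d x * f x := fun f x => rfl
  have huns_apply : ∀ l x, uns l x = l x / d x := fun l x => rfl
  set D' : Finset (X →₀ ℕ) :=
    (Finset.finsuppAntidiag T a).filter (fun l => ∀ x ∈ T, d x ∣ l x) with hD'
  have h1 : ∀ f : X →₀ ℕ, (∑ x ∈ f.support, d x * f x = a) →
      scl f ∈ D' ∧ uns (scl f) = f := by
    intro f hf
    have hsubT : f.support ⊆ T := by
      intro x hx
      have hfx : 1 ≤ f x := Nat.one_le_iff_ne_zero.mpr (Finsupp.mem_support_iff.mp hx)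
      have hle : d x * f x ≤ a := hf ▸ Finset.single_le_sum
        (f := fun x => d x * f x) (fun y _ => Nat.zero_le _) hx
      exact hTdeg x (le_trans (Nat.le_mul_of_pos_right _ hfx) hle)
    have hsupp : (scl f).support = f.support := by
      ext x
      have hdx : d x ≠ 0 := by have := hd x; omega
      simp only [hscl, Finsupp.mem_support_iff, Finsupp.onFinset_apply, Nat.mul_ne_zero_iff]
      tauto
    constructor
    · rw [hD', Finset.mem_filter, Finset.mem_finsuppAntidiag]
      refine ⟨⟨?_, hsupp ▸ hsubT⟩, fun x _ => dvd_mul_right _ _⟩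
      rw [← hf]
      exact (Finset.sum_subset hsubT fun x _ hx => by
        rw [hscl_apply, Finsupp.notMem_support_iff.mp hx, mul_zero]).symm
    · ext x
      rw [huns_apply, hscl_apply]
      exact Nat.mul_div_cancel_left _ (hd x)
  have h2 : ∀ l ∈ D', (∑ x ∈ (uns l).support, d x * (uns l) x = a) ∧ scl (uns l) = l := by
    intro l hl
    rw [hD', Finset.mem_filter, Finset.mem_finsuppAntidiag] at hl
    obtain ⟨⟨hl1, hl2⟩, hl3⟩ := hl
    have hall : ∀ x, d x ∣ l x := by
      intro x
      by_cases hx : x ∈ T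
      · exact hl3 x hx
      · rw [Finsupp.notMem_support_iff.mp (fun h => hx (hl2 h))]
        exact dvd_zero _
    have hsc : scl (uns l) = l := by
      ext x
      rw [hscl_apply, huns_apply]
      exact Nat.mul_div_cancel' (hall x)
    have hsupp : (uns l).support = l.support := by
      ext x
      simp only [Finsupp.mem_support_iff, huns_apply]
      constructor
      · intro h h0; exact h (by rw [h0, Nat.zero_div])
      · intro h h0
        have hge : d x ≤ l x := Nat.le_of_dvd (Nat.pos_of_ne_zero h) (hall x)
        have := (Nat.div_eq_zero_iff.mp h0).resolve_left (by have := hd x; omega)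
        omega
    refine ⟨?_, hsc⟩
    rw [hsupp]
    calc ∑ x ∈ l.support, d x * (uns l) x = ∑ x ∈ l.support, l x := by
          exact Finset.sum_congr rfl fun x _ => by
            rw [huns_apply]; exact Nat.mul_div_cancel' (hall x)
      _ = ∑ x ∈ T, l x := Finset.sum_subset hl2 fun x _ hx =>
            Finsupp.notMem_support_iff.mp hx
      _ = a := hl1
  -- rewrite the finsum as a finite sum
  have hSF : {f : X →₀ ℕ | ∑ x ∈ f.support, d x * f x = a} = ↑(D'.image uns) := by
    ext f
    simp only [Set.mem_setOf_eq, Finset.coe_image, Set.mem_image, Finset.mem_coe]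
    constructor
    · intro hf; exact ⟨scl f, (h1 f hf).1, (h1 f hf).2⟩
    · rintro ⟨l, hl, rfl⟩; exact (h2 l hl).1
  have hnot : (∑ᶠ (f : X →₀ ℕ) (_ : ∑ x ∈ f.support, d x * f x = a),
        ∏ x ∈ f.support, ((q : ℚ) ^ (d x * f x) - (q : ℚ) ^ (d x * f x - d x))) =
      ∑ᶠ f ∈ {f : X →₀ ℕ | ∑ x ∈ f.support, d x * f x = a},
        ∏ x ∈ f.support, ((q : ℚ) ^ (d x * f x) - (q : ℚ) ^ (d x * f x - d x)) := rfl
  rw [hnot, hSF, finsum_mem_coe_finset,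
    Finset.sum_image (fun x hx y hy hxy => by
      rw [← (h2 x hx).2, ← (h2 y hy).2, hxy])]
  -- identify with a coefficient of a product of power series
  have hstep : ∑ l ∈ D', ∏ x ∈ (uns l).support,
        ((q : ℚ) ^ (d x * (uns l) x) - (q : ℚ) ^ (d x * (uns l) x - d x)) =
      ∑ l ∈ Finset.finsuppAntidiag T a, ∏ x ∈ T,
        (PowerSeries.coeff (l x)) (SumTorsionAux.Lser (q : ℚ) (d x)) := by
    have hvan : ∀ l ∈ Finset.finsuppAntidiag T a, l ∉ D' → ∏ x ∈ T,
        (PowerSeries.coeff (l x)) (SumTorsionAux.Lser (q : ℚ) (d x)) = 0 := by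
      intro l hl hlD
      rw [hD', Finset.mem_filter] at hlD
      push_neg at hlD
      obtain ⟨x, hxT, hxdvd⟩ := hlD hl
      exact Finset.prod_eq_zero hxT (by
        rw [SumTorsionAux.coeff_Lser, if_neg hxdvd])
    refine (Finset.sum_congr rfl ?_).trans
      (Finset.sum_subset (hD' ▸ Finset.filter_subset _ _) hvan)
    intro l hl
    have hl' := hl
    rw [hD', Finset.mem_filter, Finset.mem_finsuppAntidiag] at hl'
    obtain ⟨⟨hl1, hl2⟩, hl3⟩ := hl'
    have hall : ∀ x, d x ∣ l x := by
      intro x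
      by_cases hx : x ∈ T
      · exact hl3 x hx
      · rw [Finsupp.notMem_support_iff.mp (fun h => hx (hl2 h))]
        exact dvd_zero _
    have hsupp : (uns l).support = l.support := by
      ext x
      simp only [Finsupp.mem_support_iff, huns_apply]
      constructor
      · intro h h0; exact h (by rw [h0, Nat.zero_div])
      · intro h h0
        have hge : d x ≤ l x := Nat.le_of_dvd (Nat.pos_of_ne_zero h) (hall x)
        have := (Nat.div_eq_zero_iff.mp h0).resolve_left (by have := hd x; omega)
        omega
    rw [hsupp]
    rw [← Finset.prod_subset hl2 (fun x _ hx => by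
      rw [Finsupp.notMem_support_iff.mp hx, SumTorsionAux.coeff_Lser,
        if_pos (dvd_zero _), if_pos rfl])]
    apply Finset.prod_congr rfl
    intro x hx
    have hlx : l x ≠ 0 := Finsupp.mem_support_iff.mp hx
    have hdl : d x * (uns l) x = l x := by
      rw [huns_apply]; exact Nat.mul_div_cancel' (hall x)
    rw [hdl, SumTorsionAux.coeff_Lser, if_pos (hall x), if_neg hlx]
  rw [hstep, ← PowerSeries.coeff_prod]
  exact SumTorsionAux.coeff_prod_Lser q T d (fun x _ => hd x) a ha hsum
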